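/- Under the discrete setup of Lemma 2.1 with distinct observation values, the function Λ_T,n⁻(dt) := H₀,n(dt)/(F̃_L,n(t−) − H_n(t−)) is nonnegative, nondecreasing (as a cumulative function) and has all jumps of size at most one. -/

import Mathlib

open Finset

/-- Lemma 2.1 of the paper (discrete setup with distinct observation values):
the function `Λ_{T,n}⁻(dt) = H₀ₙ(dt)/(F̃_{L,n}(t−) − Hₙ(t−))`, i.e. the cumulative hazard
`Λ(t) = Σ_{Yᵢ ≤ t, δᵢ = 0} wᵢ/(F̃_{L,n}(Yᵢ−) − Hₙ(Yᵢ−))`, is nonnegative, nondecreasing,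
and has all jumps of size at most one (with the convention `0/0 = 0`, which is the
built-in convention for division in Lean). -/
theorem hazard_estimate_properties (n : ℕ) (Y : Fin n → ℝ) (hY : StrictMono Y)
    (w : Fin n → ℝ) (hw : ∀ i, 0 < w i) (hw1 : ∑ i, w i = 1)
    (δ : Fin n → Fin 3)
    (H Hminus FLminus Λ : ℝ → ℝ)
    (hH : ∀ t, H t = ∑ i ∈ univ.filter (fun i => Y i ≤ t), w i)
    (hHm : ∀ t, Hminus t = ∑ i ∈ univ.filter (fun i => Y i < t), w i)
    (hFL : ∀ t, FLminus t = ∏ i ∈ univ.filter (fun i => t ≤ Y i ∧ δ i = 2),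
        (1 - w i / H (Y i)))
    (hΛ : ∀ t, Λ t = ∑ i ∈ univ.filter (fun i => Y i ≤ t ∧ δ i = 0),
        w i / (FLminus (Y i) - Hminus (Y i))) :
    (∀ t, 0 ≤ Λ t) ∧ Monotone Λ ∧
      (∀ i : Fin n, δ i = 0 → w i / (FLminus (Y i) - Hminus (Y i)) ≤ 1) := by
  -- values of H and Hminus at observation points
  have hHY : ∀ i : Fin n, H (Y i) = ∑ k ∈ Finset.Iic i, w k := by
    intro i; rw [hH]
    congr 1
    ext k; simp [hY.le_iff_le]
  have hHmY : ∀ i : Fin n, Hminus (Y i) = ∑ k ∈ Finset.Iio i, w k := by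
    intro i; rw [hHm]
    congr 1
    ext k; simp [hY.lt_iff_lt]
  have hApos : ∀ i : Fin n, 0 < H (Y i) := by
    intro i; rw [hHY]
    exact Finset.sum_pos (fun k _ => hw k) ⟨i, Finset.mem_Iic.2 le_rfl⟩
  have hAle1 : ∀ i : Fin n, H (Y i) ≤ 1 := by
    intro i; rw [hHY, ← hw1]
    exact Finset.sum_le_sum_of_subset_of_nonneg (Finset.subset_univ _)
      (fun k _ _ => (hw k).le)
  have hsplit : ∀ i : Fin n, H (Y i) = Hminus (Y i) + w i := by
    intro i
    rw [hHY, hHmY, ← Finset.Iio_insert, Finset.sum_insert (by simp)]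
    ring
  have hsub : ∀ j m : Fin n, j < m → H (Y j) ≤ H (Y m) - w m := by
    intro j m hjm
    have h1 : H (Y m) - w m = ∑ k ∈ Finset.Iio m, w k := by
      rw [hsplit m, hHmY]; ring
    rw [h1, hHY]
    exact Finset.sum_le_sum_of_subset_of_nonneg
      (fun k hk => Finset.mem_Iio.2 (lt_of_le_of_lt (Finset.mem_Iic.1 hk) hjm))
      (fun k _ _ => (hw k).le)
  -- key product lower bound
  have key : ∀ S : Finset (Fin n), ∀ j : Fin n, (∀ i ∈ S, j < i) →
      H (Y j) ≤ ∏ i ∈ S, (1 - w i / H (Y i)) := by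
    intro S
    induction S using Finset.induction_on_min with
    | empty =>
      intro j _
      rw [Finset.prod_empty]
      exact hAle1 j
    | insert a s ha ih =>
      intro j hj
      have hja : j < a := hj a (Finset.mem_insert_self a s)
      have hans : a ∉ s := fun h => lt_irrefl a (ha a h)
      have hprod : H (Y a) ≤ ∏ i ∈ s, (1 - w i / H (Y i)) := ih a ha
      have hfacd : (1 : ℝ) - w a / H (Y a) = (H (Y a) - w a) / H (Y a) := by
        rw [sub_div, div_self (hApos a).ne']
      have hfac : H (Y j) / H (Y a) ≤ 1 - w a / H (Y a) := by
        rw [hfacd]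
        gcongr
        · exact (hApos a).le
        · exact hsub j a hja
      have h0 : 0 ≤ H (Y j) / H (Y a) := div_nonneg (hApos j).le (hApos a).le
      rw [Finset.prod_insert hans]
      calc H (Y j) = H (Y j) / H (Y a) * H (Y a) := by
              rw [div_mul_cancel₀ _ (hApos a).ne']
        _ ≤ (1 - w a / H (Y a)) * ∏ i ∈ s, (1 - w i / H (Y i)) :=
              mul_le_mul hfac hprod (hApos a).le (le_trans h0 hfac)
  -- denominator lower bound for δ i = 0
  have hden : ∀ i : Fin n, δ i = 0 → w i ≤ FLminus (Y i) - Hminus (Y i) := by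
    intro i hi
    have hS : ∀ k ∈ univ.filter (fun k => Y i ≤ Y k ∧ δ k = 2), i < k := by
      intro k hk
      simp only [Finset.mem_filter] at hk
      obtain ⟨-, hle, hk2⟩ := hk
      rcases lt_or_eq_of_le (hY.le_iff_le.mp hle) with h | h
      · exact h
      · exfalso; rw [← h, hi] at hk2; exact absurd hk2 (by decide)
    have h1 : H (Y i) ≤ FLminus (Y i) := by rw [hFL]; exact key _ i hS
    have h2 := hsplit i
    linarith
  -- each term is nonnegative and ≤ 1
  have hterm0 : ∀ i : Fin n, δ i = 0 → 0 ≤ w i / (FLminus (Y i) - Hminus (Y i)) := by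
    intro i hi
    exact div_nonneg (hw i).le (le_trans (hw i).le (hden i hi))
  have hterm1 : ∀ i : Fin n, δ i = 0 → w i / (FLminus (Y i) - Hminus (Y i)) ≤ 1 := by
    intro i hi
    rw [div_le_one (lt_of_lt_of_le (hw i) (hden i hi))]
    exact le_trans (hden i hi) (by linarith [hden i hi, hw i])
  refine ⟨?_, ?_, hterm1⟩
  · intro t
    rw [hΛ]
    refine Finset.sum_nonneg fun i hi => ?_
    simp only [Finset.mem_filter] at hi
    exact hterm0 i hi.2.2
  · intro s t hst
    rw [hΛ s, hΛ t]
    refine Finset.sum_le_sum_of_subset_of_nonneg ?_ ?_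
    · intro i hi
      simp only [Finset.mem_filter] at hi ⊢
      exact ⟨hi.1, le_trans hi.2.1 hst, hi.2.2⟩
    · intro i hi _
      simp only [Finset.mem_filter] at hi
      exact hterm0 i hi.2.2
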